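/- Robust Bayes equals maximum entropy: for a nonempty compact convex set A of probability distributions on a finite set X, min_{Q ∈ Δ(X)} max_{P ∈ A} H(P,Q) = max_{P ∈ A} H(P), where H(P,Q) is cross entropy. -/

import Mathlib

open scoped BigOperators
open Real Filter Set
open scoped Topology

/-- Cross entropy `H(P,Q)` valued in `EReal`, taking `⊤` when `Q x = 0` but `P x > 0`. -/
noncomputable def crossEntE {X : Type*} [Fintype X] (P Q : X → ℝ) : EReal :=
  ∑ x, (if Q x = 0 ∧ P x ≠ 0 then (⊤ : EReal) else ((-(P x * Real.log (Q x)) : ℝ) : EReal))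

noncomputable def crossR {X : Type*} [Fintype X] (P Q : X → ℝ) : ℝ :=
  ∑ x, -(P x * Real.log (Q x))

lemma ereal_coe_sum {ι : Type*} (s : Finset ι) (f : ι → ℝ) :
    ((∑ i ∈ s, f i : ℝ) : EReal) = ∑ i ∈ s, ((f i : ℝ) : EReal) := by
  classical
  induction s using Finset.induction with
  | empty => simp
  | insert _ _ h ih => simp [Finset.sum_insert h, EReal.coe_add, ih]

lemma ereal_sum_ne_bot {ι : Type*} (s : Finset ι) (f : ι → EReal)
    (h : ∀ i ∈ s, f i ≠ ⊥) : ∑ i ∈ s, f i ≠ ⊥ := by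
  classical
  induction s using Finset.induction with
  | empty => simp
  | insert _ _ hmem ih =>
      rename_i a s'
      rw [Finset.sum_insert hmem, Ne, EReal.add_eq_bot_iff]
      push_neg
      exact ⟨h a (Finset.mem_insert_self a s'), ih fun i hi => h i (Finset.mem_insert_of_mem hi)⟩

lemma crossEntE_eq_coe {X : Type*} [Fintype X] {P Q : X → ℝ}
    (h : ∀ x, Q x = 0 → P x = 0) : crossEntE P Q = ((crossR P Q : ℝ) : EReal) := by
  rw [crossR, crossEntE, ereal_coe_sum]
  refine Finset.sum_congr rfl fun x _ => ?_
  rw [if_neg]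
  rintro ⟨hq, hp⟩
  exact hp (h x hq)

lemma crossEntE_eq_top {X : Type*} [Fintype X] {P Q : X → ℝ} (x0 : X)
    (hq : Q x0 = 0) (hp : P x0 ≠ 0) : crossEntE P Q = ⊤ := by
  classical
  rw [crossEntE, ← Finset.add_sum_erase _ _ (Finset.mem_univ x0), if_pos ⟨hq, hp⟩]
  refine EReal.top_add_of_ne_bot (ereal_sum_ne_bot _ _ fun i _ => ?_)
  split
  · simp
  · exact EReal.coe_ne_bot _

/-- Gibbs' inequality (real version). -/
lemma gibbsR {X : Type*} [Fintype X] {P Q : X → ℝ}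
    (hP0 : ∀ x, 0 ≤ P x) (hP1 : ∑ x, P x = 1)
    (hQ0 : ∀ x, 0 ≤ Q x) (hQ1 : ∑ x, Q x = 1)
    (h : ∀ x, Q x = 0 → P x = 0) :
    (-∑ x, P x * Real.log (P x)) ≤ crossR P Q := by
  have key : ∀ x : X, P x * Real.log (Q x) - P x * Real.log (P x) ≤ Q x - P x := by
    intro x
    rcases eq_or_lt_of_le (hP0 x) with h0 | h0
    · rw [← h0]; simpa using hQ0 x
    · have hQpos : 0 < Q x := lt_of_le_of_ne (hQ0 x) fun e => h0.ne' (h x e.symm)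
      have hlog := Real.log_le_sub_one_of_pos (div_pos hQpos h0)
      rw [Real.log_div hQpos.ne' h0.ne'] at hlog
      have := mul_le_mul_of_nonneg_left hlog (hP0 x)
      calc P x * Real.log (Q x) - P x * Real.log (P x)
          = P x * (Real.log (Q x) - Real.log (P x)) := by ring
        _ ≤ P x * (Q x / P x - 1) := mul_le_mul_of_nonneg_left hlog (hP0 x)
        _ = Q x - P x := by field_simp
  have hsum : ∑ x, (P x * Real.log (Q x) - P x * Real.log (P x)) ≤ ∑ x, (Q x - P x) :=
    Finset.sum_le_sum fun x _ => key x
  rw [Finset.sum_sub_distrib, Finset.sum_sub_distrib, hP1, hQ1] at hsum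
  rw [crossR]
  have hne : ∑ x, -(P x * Real.log (Q x)) = -∑ x, P x * Real.log (Q x) :=
    Finset.sum_neg_distrib _
  linarith

/-- Key lemma: if `Ps` maximizes entropy on a convex set `A` inside the simplex,
then `H(P, Ps) ≤ H(Ps)` for all `P ∈ A`. -/
lemma key_lemma {X : Type*} [Fintype X] {A : Set (X → ℝ)} (hconv : Convex ℝ A)
    (hsub : A ⊆ {p : X → ℝ | (∀ x, 0 ≤ p x) ∧ ∑ x, p x = 1})
    {Ps : X → ℝ} (hPsA : Ps ∈ A)
    (hmax : ∀ P ∈ A, (-∑ x, P x * Real.log (P x)) ≤ -∑ x, Ps x * Real.log (Ps x))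
    {P : X → ℝ} (hP : P ∈ A) :
    crossEntE P Ps ≤ ((-∑ x, Ps x * Real.log (Ps x) : ℝ) : EReal) := by
  classical
  set E : ℝ := -∑ x, Ps x * Real.log (Ps x) with hE
  obtain ⟨hPs0, hPs1⟩ := hsub hPsA
  obtain ⟨hP0, hP1⟩ := hsub hP
  set Pt : ℝ → X → ℝ := fun t x => (1 - t) * Ps x + t * P x with hPt
  -- elementary facts about Pt for t ∈ (0, 1]
  have hPtA : ∀ t ∈ Ioo (0:ℝ) 1, Pt t ∈ A := by
    intro t ht
    have hmem := hconv hPsA hP (by linarith [ht.2] : (0:ℝ) ≤ 1 - t) ht.1.le (by ring)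
    have heq : Pt t = (1 - t) • Ps + t • P := by
      funext x
      simp [hPt, smul_eq_mul]
    rw [heq]
    exact hmem
  have bound : ∀ t ∈ Ioo (0:ℝ) 1, crossR P (Pt t) ≤ E := by
    intro t ht
    have htA := hPtA t ht
    obtain ⟨hq0, hq1⟩ := hsub htA
    have hzero : ∀ x, Pt t x = 0 → Ps x = 0 ∧ P x = 0 := by
      intro x hx
      have h1 : 0 ≤ (1 - t) * Ps x := mul_nonneg (by linarith [ht.2]) (hPs0 x)
      have h2 : 0 ≤ t * P x := mul_nonneg ht.1.le (hP0 x)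
      have e1 : (1 - t) * Ps x = 0 := by simp only [hPt] at hx; linarith
      have e2 : t * P x = 0 := by simp only [hPt] at hx; linarith
      constructor
      · rcases mul_eq_zero.1 e1 with h | h
        · linarith [ht.2]
        · exact h
      · rcases mul_eq_zero.1 e2 with h | h
        · exact absurd h ht.1.ne'
        · exact h
    -- identity: entropy of Pt = (1-t) * crossR Ps Pt + t * crossR P Pt
    have ident : (-∑ x, Pt t x * Real.log (Pt t x))
        = (1 - t) * crossR Ps (Pt t) + t * crossR P (Pt t) := by
      rw [crossR, crossR, Finset.mul_sum, Finset.mul_sum, ← Finset.sum_add_distrib,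
        ← Finset.sum_neg_distrib]
      refine Finset.sum_congr rfl fun x _ => ?_
      simp only [hPt]; ring
    have hgibbs : E ≤ crossR Ps (Pt t) :=
      gibbsR hPs0 hPs1 hq0 hq1 (fun x hx => (hzero x hx).1)
    have hmaxt : (-∑ x, Pt t x * Real.log (Pt t x)) ≤ E := hmax _ htA
    nlinarith [ht.1, mul_le_mul_of_nonneg_left hgibbs (by linarith [ht.2] : (0:ℝ) ≤ 1 - t)]
  by_cases hcase : ∀ x, Ps x = 0 → P x = 0
  · -- finite case, take the limit t → 0⁺
    rw [crossEntE_eq_coe hcase, EReal.coe_le_coe_iff]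
    have tend : Tendsto (fun t => crossR P (Pt t)) (𝓝[>] (0:ℝ)) (𝓝 (crossR P Ps)) := by
      have : Tendsto (fun t => crossR P (Pt t)) (𝓝 (0:ℝ)) (𝓝 (crossR P Ps)) := by
        rw [crossR]
        have : ∀ x : X, Tendsto (fun t : ℝ => -(P x * Real.log (Pt t x))) (𝓝 0)
            (𝓝 (-(P x * Real.log (Ps x)))) := by
          intro x
          by_cases hPx : P x = 0
          · simp only [hPx, zero_mul, neg_zero]
            exact tendsto_const_nhds
          · have hPsx : Ps x ≠ 0 := fun e => hPx (hcase x e)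
            have haff : Tendsto (fun t : ℝ => Pt t x) (𝓝 0) (𝓝 (Ps x)) := by
              have : Tendsto (fun t : ℝ => (1 - t) * Ps x + t * P x) (𝓝 0)
                  (𝓝 ((1 - 0) * Ps x + 0 * P x)) := by
                apply Tendsto.add
                · exact (tendsto_const_nhds.sub tendsto_id).mul tendsto_const_nhds
                · exact tendsto_id.mul tendsto_const_nhds
              simpa [hPt] using this
            have hlog : Tendsto (fun t : ℝ => Real.log (Pt t x)) (𝓝 0) (𝓝 (Real.log (Ps x))) :=
              (Real.continuousAt_log hPsx).tendsto.comp haff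
            exact (tendsto_const_nhds.mul hlog).neg
        have := tendsto_finset_sum Finset.univ (fun x _ => this x)
        simpa [crossR] using this
      exact this.mono_left nhdsWithin_le_nhds
    refine le_of_tendsto tend ?_
    filter_upwards [Ioo_mem_nhdsGT_of_mem (by constructor <;> norm_num : (0:ℝ) ∈ Ico (0:ℝ) 1)] with t ht
    exact bound t ht
  · -- impossible case: H(P, Ps) = ⊤ would contradict maximality
    exfalso
    push_neg at hcase
    obtain ⟨x0, hq, hp⟩ := hcase
    have hc : 0 < P x0 := lt_of_le_of_ne (hP0 x0) (Ne.symm hp)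
    set c := P x0 with hcdef
    set t0 : ℝ := min (1/2) (Real.exp (-(E + 1) / c) / c) with ht0def
    have ht0pos : 0 < t0 := lt_min (by norm_num) (div_pos (Real.exp_pos _) hc)
    have ht0 : t0 ∈ Ioo (0:ℝ) 1 := ⟨ht0pos, lt_of_le_of_lt (min_le_left _ _) (by norm_num)⟩
    have hb := bound t0 ht0
    obtain ⟨hq0, hq1⟩ := hsub (hPtA t0 ht0)
    -- each term of crossR P (Pt t0) is nonnegative
    have hterm : ∀ x : X, 0 ≤ -(P x * Real.log (Pt t0 x)) := by
      intro x
      have hle1 : Pt t0 x ≤ 1 := by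
        rw [← hq1]
        exact Finset.single_le_sum (fun y _ => hq0 y) (Finset.mem_univ x)
      have := Real.log_nonpos (hq0 x) hle1
      have := mul_nonneg (hP0 x) (neg_nonneg.2 this)
      linarith
    have hPtx0 : Pt t0 x0 = t0 * c := by simp [hPt, hq, hcdef]
    have hsum_ge : -(P x0 * Real.log (Pt t0 x0)) ≤ crossR P (Pt t0) := by
      rw [crossR]
      exact Finset.single_le_sum (fun x _ => hterm x) (Finset.mem_univ x0)
    have hlogle : Real.log (t0 * c) ≤ -(E + 1) / c := by
      have h1 : t0 * c ≤ Real.exp (-(E + 1) / c) := by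
        have : t0 ≤ Real.exp (-(E + 1) / c) / c := min_le_right _ _
        calc t0 * c ≤ (Real.exp (-(E + 1) / c) / c) * c :=
              mul_le_mul_of_nonneg_right this hc.le
          _ = Real.exp (-(E + 1) / c) := by field_simp
      calc Real.log (t0 * c) ≤ Real.log (Real.exp (-(E + 1) / c)) :=
            Real.log_le_log (mul_pos ht0pos hc) h1
        _ = -(E + 1) / c := Real.log_exp _
    have : E + 1 ≤ -(P x0 * Real.log (Pt t0 x0)) := by
      rw [hPtx0, ← hcdef]
      have := mul_le_mul_of_nonneg_left hlogle hc.le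
      rw [mul_div_cancel₀] at this
      · linarith
      · exact hc.ne'
    linarith

/-- Robust Bayes equals maximum entropy:
`min_{Q ∈ Δ(X)} max_{P ∈ A} H(P,Q) = max_{P ∈ A} H(P)` for nonempty compact convex `A`. -/
theorem robustBayes_eq_maxEntropy {X : Type*} [Fintype X]
    (A : Set (X → ℝ)) (hne : A.Nonempty) (hcomp : IsCompact A) (hconv : Convex ℝ A)
    (hsub : A ⊆ {p : X → ℝ | (∀ x, 0 ≤ p x) ∧ ∑ x, p x = 1}) :
    (⨅ Q ∈ {p : X → ℝ | (∀ x, 0 ≤ p x) ∧ ∑ x, p x = 1}, ⨆ P ∈ A, crossEntE P Q)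
      = ⨆ P ∈ A, ((-∑ x, P x * Real.log (P x) : ℝ) : EReal) := by
  classical
  -- entropy is continuous
  have hcont : Continuous fun p : X → ℝ => -∑ x, p x * Real.log (p x) :=
    (continuous_finset_sum _ fun x _ =>
      Real.continuous_mul_log.comp (continuous_apply x)).neg
  obtain ⟨Ps, hPsA, hmax'⟩ := hcomp.exists_isMaxOn hne hcont.continuousOn
  have hmax : ∀ P ∈ A, (-∑ x, P x * Real.log (P x)) ≤ -∑ x, Ps x * Real.log (Ps x) :=
    fun P hP => hmax' hP
  apply le_antisymm
  · refine iInf₂_le_of_le Ps (hsub hPsA) ?_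
    refine iSup₂_le fun P hP => ?_
    exact (key_lemma hconv hsub hPsA hmax hP).trans
      (le_iSup₂_of_le Ps hPsA (le_refl _))
  · refine le_iInf₂ fun Q hQ => ?_
    refine iSup₂_le fun P hP => le_iSup₂_of_le P hP ?_
    -- Gibbs in EReal
    by_cases hcase : ∀ x, Q x = 0 → P x = 0
    · rw [crossEntE_eq_coe hcase, EReal.coe_le_coe_iff]
      obtain ⟨hP0, hP1⟩ := hsub hP
      exact gibbsR hP0 hP1 hQ.1 hQ.2 hcase
    · push_neg at hcase
      obtain ⟨x0, hq, hp⟩ := hcase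
      rw [crossEntE_eq_top x0 hq hp]
      exact le_top
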